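/- In ℍⁿ×ℝ (n ≥ 2), the profile function of the rotational half-catenoid over the geodesic sphere of radius r > 0, a(s) = sinh^{n−1}(r) ∫_r^s (sinh^{2n−2}(τ) − sinh^{2n−2}(r))^{−1/2} dτ, is bounded above by π/(2(n−1)) for all s > r. Hence each rotational catenoid Σ_r in ℍⁿ×ℝ is contained in a horizontal slab of width π/(n−1). -/

import Mathlib

open MeasureTheory Set intervalIntegral


/-- In `ℍⁿ × ℝ` (`n ≥ 2`), the profile function of the rotational
half-catenoid over the geodesic sphere of radius `r > 0`,
`a(s) = sinh^{n-1}(r) ∫_r^s (sinh^{2n-2}τ - sinh^{2n-2}r)^{-1/2} dτ`,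
satisfies `0 ≤ a(s) ≤ π/(2(n-1))` for all `s > r`; hence the rotational
catenoid `Σ_r` (obtained by reflecting the half-catenoid) is contained in a
horizontal slab of width `π/(n-1)`. -/
theorem stmt_19 (n : ℕ) (hn : 2 ≤ n) (r : ℝ) (hr : 0 < r) :
    ∀ s, r < s →
      0 ≤ (Real.sinh r) ^ (n - 1) *
          (∫ τ in r..s,
            (Real.sqrt ((Real.sinh τ) ^ (2 * n - 2) - (Real.sinh r) ^ (2 * n - 2)))⁻¹) ∧
      (Real.sinh r) ^ (n - 1) *
          (∫ τ in r..s,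
            (Real.sqrt ((Real.sinh τ) ^ (2 * n - 2) - (Real.sinh r) ^ (2 * n - 2)))⁻¹)
        ≤ Real.pi / (2 * ((n : ℝ) - 1)) := by
  intro s hs
  have hsinhr : 0 < Real.sinh r := Real.sinh_pos_iff.2 hr
  set m := n - 1 with hm
  have hm1 : 1 ≤ m := by omega
  have hmR : ((n : ℝ) - 1) = (m : ℝ) := by
    rw [hm, Nat.cast_sub (by omega : 1 ≤ n)]; norm_num
  have hmpos : (0 : ℝ) < (m : ℝ) := by exact_mod_cast hm1
  set P : ℝ → ℝ := fun τ => Real.sinh τ ^ m with hP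
  have hre : ∀ τ : ℝ, Real.sinh τ ^ (2 * n - 2) - Real.sinh r ^ (2 * n - 2)
      = P τ ^ 2 - P r ^ 2 := by
    intro τ
    have h2 : 2 * n - 2 = m * 2 := by omega
    simp only [hP, h2, pow_mul]
  simp only [hre]
  set I : ℝ → ℝ := fun τ => (Real.sqrt (P τ ^ 2 - P r ^ 2))⁻¹ with hI
  have hPr : 0 < P r := pow_pos hsinhr m
  have hInonneg : ∀ τ, 0 ≤ I τ := fun τ => by positivity
  refine ⟨mul_nonneg hPr.le (intervalIntegral.integral_nonneg hs.le fun τ _ => hInonneg τ), ?_⟩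
  by_cases hInt : IntervalIntegrable I volume r s
  · -- main case
    set g : ℝ → ℝ := fun τ => Real.arcsin (P r / P τ) with hg
    set φ : ℝ → ℝ := fun τ => (m : ℝ) * P r * (Real.cosh τ / Real.sinh τ) * I τ with hφ
    -- basic facts on Icc
    have hIcc : ∀ τ ∈ Icc r s, 0 < Real.sinh τ :=
      fun τ hτ => Real.sinh_pos_iff.2 (lt_of_lt_of_le hr hτ.1)
    have hratio : ∀ τ ∈ Icc r s, 1 ≤ Real.cosh τ / Real.sinh τ := by
      intro τ hτ
      exact (one_le_div (hIcc τ hτ)).2 (Real.sinh_lt_cosh τ).le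
    -- derivative of g on Ioo
    have hderiv : ∀ τ ∈ Ioo r s, HasDerivAt g (-φ τ) τ := by
      intro τ hτ
      have hsτ : 0 < Real.sinh τ := Real.sinh_pos_iff.2 (hr.trans hτ.1)
      have hPτ : 0 < P τ := pow_pos hsτ m
      have hPlt : P r < P τ := by
        apply pow_lt_pow_left₀ (Real.sinh_lt_sinh.2 hτ.1) hsinhr.le (by omega)
      have hx1 : P r / P τ < 1 := (div_lt_one hPτ).2 hPlt
      have hx0 : 0 < P r / P τ := div_pos hPr hPτ
      have hD : 0 < P τ ^ 2 - P r ^ 2 := by nlinarith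
      have hPder : HasDerivAt P ((m : ℝ) * Real.sinh τ ^ (m - 1) * Real.cosh τ) τ :=
        (Real.hasDerivAt_sinh τ).pow m
      have hq : HasDerivAt (fun τ => P r / P τ)
          ((0 * P τ - P r * ((m : ℝ) * Real.sinh τ ^ (m - 1) * Real.cosh τ)) / P τ ^ 2) τ :=
        (hasDerivAt_const τ (P r)).div hPder hPτ.ne'
      have harc : HasDerivAt Real.arcsin
          (1 / Real.sqrt (1 - (P r / P τ) ^ 2)) (P r / P τ) :=
        Real.hasDerivAt_arcsin (by linarith) hx1.ne
      have := harc.comp τ hq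
      refine this.congr_deriv ?_
      have hsq : Real.sqrt (1 - (P r / P τ) ^ 2)
          = Real.sqrt (P τ ^ 2 - P r ^ 2) / P τ := by
        rw [show 1 - (P r / P τ) ^ 2 = (P τ ^ 2 - P r ^ 2) / P τ ^ 2 by
          field_simp]
        rw [Real.sqrt_div hD.le, Real.sqrt_sq hPτ.le]
      have hsqrtpos : 0 < Real.sqrt (P τ ^ 2 - P r ^ 2) := Real.sqrt_pos.2 hD
      have hpow : Real.sinh τ ^ (m - 1) * Real.sinh τ = P τ := by
        rw [hP, ← pow_succ]
        congr 1
        omega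
      have hpow' : Real.sinh τ ^ (m - 1) = P τ / Real.sinh τ := by
        field_simp [← hpow]
        exact hpow
      simp only [hφ, hI, hsq, Function.comp, hpow']
      field_simp
      ring
    -- continuity of g on Icc
    have hgcont : ContinuousOn g (Icc r s) := by
      apply Real.continuous_arcsin.comp_continuousOn
      apply continuousOn_const.div ((Real.continuous_sinh.pow m).continuousOn)
      intro τ hτ
      exact (pow_pos (hIcc τ hτ) m).ne'
    -- integrability of φ
    have hφint : IntervalIntegrable φ volume r s := by
      have hc : ContinuousOn (fun τ => (m : ℝ) * P r * (Real.cosh τ / Real.sinh τ)) (uIcc r s) := by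
        rw [uIcc_of_le hs.le]
        exact continuousOn_const.mul (Real.continuous_cosh.continuousOn.div
          Real.continuous_sinh.continuousOn (fun τ hτ => (hIcc τ hτ).ne'))
      have := hInt.continuousOn_mul hc
      simpa [hφ, mul_assoc] using this
    have hφintneg : IntervalIntegrable (fun τ => -φ τ) volume r s := hφint.neg
    -- FTC
    have hFTC : ∫ τ in r..s, -φ τ = g s - g r :=
      integral_eq_sub_of_hasDerivAt_of_le hs.le hgcont hderiv hφintneg
    have hgr : g r = Real.pi / 2 := by
      simp [hg, div_self hPr.ne', Real.arcsin_one]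
    have hgs : 0 ≤ g s := by
      simp only [hg]
      have hsτ : 0 < Real.sinh s := Real.sinh_pos_iff.2 (hr.trans hs)
      exact Real.arcsin_nonneg.2 (by positivity)
    have hφval : ∫ τ in r..s, φ τ = g r - g s := by
      have := hFTC
      rw [intervalIntegral.integral_neg] at this
      linarith
    -- comparison
    have hmono : ∫ τ in r..s, (m : ℝ) * P r * I τ ≤ ∫ τ in r..s, φ τ := by
      apply intervalIntegral.integral_mono_on hs.le (hInt.const_mul _) hφint
      intro τ hτ
      have h1 : 1 ≤ Real.cosh τ / Real.sinh τ := hratio τ hτ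
      have h2 : 0 ≤ (m : ℝ) * P r * I τ := by
        have := hInonneg τ; positivity
      calc (m : ℝ) * P r * I τ = (m : ℝ) * P r * 1 * I τ := by ring
        _ ≤ (m : ℝ) * P r * (Real.cosh τ / Real.sinh τ) * I τ := by
            have := hInonneg τ
            apply mul_le_mul_of_nonneg_right _ this
            apply mul_le_mul_of_nonneg_left h1 (by positivity)
        _ = φ τ := rfl
    have hconst : ∫ τ in r..s, (m : ℝ) * P r * I τ = (m : ℝ) * P r * ∫ τ in r..s, I τ :=
      intervalIntegral.integral_const_mul _ _
    have hkey : (m : ℝ) * (P r * ∫ τ in r..s, I τ) ≤ Real.pi / 2 := by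
      rw [← mul_assoc, ← hconst]
      calc (∫ τ in r..s, (m : ℝ) * P r * I τ) ≤ ∫ τ in r..s, φ τ := hmono
        _ = g r - g s := hφval
        _ ≤ Real.pi / 2 := by rw [hgr]; linarith
    have hfin : P r * (∫ τ in r..s, I τ) ≤ Real.pi / (2 * (m : ℝ)) := by
      rw [le_div_iff₀ (by positivity : (0:ℝ) < 2 * (m : ℝ))]
      nlinarith [hkey]
    rw [hmR]
    exact hfin
  · rw [intervalIntegral.integral_undef hInt]
    rw [hmR, mul_zero]
    exact div_nonneg Real.pi_pos.le (by positivity)
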